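/- arXiv:2311.03719 — 3 statements merged into one kernel-verified Lean document; each statement's English description precedes it below -/
import Mathlib

section
/- Let P₀, P₁, …, P_p be operators such that any two either commute or anticommute (PᵢPⱼ = ±PⱼPᵢ for all i, j). If for every i ∈ {1, …, p} the operator Pᵢ anticommutes with an odd number of the operators Pⱼ with j < i, then the nested commutator satisfies [P_p, [P_{p-1}, …, [P₁, P₀]…]] = 2^p · (P_p ⋯ P₁ P₀). -/
/-- The nested commutator `[P p, [P (p-1), …, [P 1, P 0]…]]`. -/
def nestedComm {M : Type*} [Ring M] (P : ℕ → M) : ℕ → M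
  | 0 => P 0
  | k + 1 => P (k + 1) * nestedComm P k - nestedComm P k * P (k + 1)

/-- The descending product `P p * ⋯ * P 1 * P 0`. -/
def prodDesc {M : Type*} [Ring M] (P : ℕ → M) : ℕ → M
  | 0 => P 0
  | k + 1 => P (k + 1) * prodDesc P k

open Classical in
lemma prodDesc_mul_sign {N : ℕ} (P : ℕ → Matrix (Fin N) (Fin N) ℂ)
    (hcomm : ∀ i j, P i * P j = P j * P i ∨ P i * P j = -(P j * P i))
    (i : ℕ) : ∀ k, prodDesc P k * P i =
      ((-1 : ℂ) ^ (((Finset.range (k+1)).filter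
        (fun j => P j * P i = -(P i * P j))).card)) • (P i * prodDesc P k)
  | 0 => by
    by_cases h : P 0 * P i = -(P i * P 0)
    · simp [prodDesc, Finset.range_one, Finset.filter_singleton, h]
    · rcases hcomm 0 i with h' | h'
      · have hc : ((Finset.range 1).filter
            (fun j => P j * P i = -(P i * P j))).card = 0 := by
          simp [Finset.range_one, Finset.filter_singleton, h]
        rw [hc]
        simpa [prodDesc] using h'
      · exact absurd h' h
  | k + 1 => by
    have ih := prodDesc_mul_sign P hcomm i k
    have hr : Finset.range (k + 2) = insert (k+1) (Finset.range (k+1)) :=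
      Finset.range_add_one
    have hnm : (k+1) ∉ (Finset.range (k+1)).filter
        (fun j => P j * P i = -(P i * P j)) := by
      simp
    by_cases h : P (k+1) * P i = -(P i * P (k+1))
    · have hc : ((Finset.range (k+2)).filter
          (fun j => P j * P i = -(P i * P j))).card =
          ((Finset.range (k+1)).filter
          (fun j => P j * P i = -(P i * P j))).card + 1 := by
        rw [hr, Finset.filter_insert, if_pos h, Finset.card_insert_of_notMem hnm]
      rw [hc]
      simp only [prodDesc]
      rw [mul_assoc, ih, Matrix.mul_smul, ← mul_assoc, h]
      simp [pow_succ, mul_assoc]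
    · rcases hcomm (k+1) i with h' | h'
      · have hc : ((Finset.range (k+2)).filter
            (fun j => P j * P i = -(P i * P j))).card =
            ((Finset.range (k+1)).filter
            (fun j => P j * P i = -(P i * P j))).card := by
          rw [hr, Finset.filter_insert, if_neg h]
        rw [hc]
        simp only [prodDesc]
        rw [mul_assoc, ih, Matrix.mul_smul, ← mul_assoc, h', mul_assoc]
      · exact absurd h' h

/-- If operators pairwise commute or anticommute, and each `P i`
(`1 ≤ i ≤ p`) anticommutes with an odd number of the `P j`, `j < i`, then
`[P p, …, [P 1, P 0]…] = 2^p • (P p ⋯ P 1 P 0)`. -/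
theorem nestedComm_eq_of_odd_anticomm {N : ℕ} (p : ℕ)
    (P : ℕ → Matrix (Fin N) (Fin N) ℂ)
    (hcomm : ∀ i j, P i * P j = P j * P i ∨ P i * P j = -(P j * P i))
    (hodd : ∀ i, 1 ≤ i → i ≤ p →
      Odd ({j | j < i ∧ P j * P i = -(P i * P j)}.ncard)) :
    nestedComm P p = (2 ^ p : ℂ) • prodDesc P p := by
  classical
  induction p with
  | zero => simp [nestedComm, prodDesc]
  | succ k ih =>
    have ihk := ih (fun i h1 h2 => hodd i h1 (h2.trans (Nat.le_succ k)))
    have hset : {j | j < k + 1 ∧ P j * P (k+1) = -(P (k+1) * P j)} =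
        ↑((Finset.range (k+1)).filter (fun j => P j * P (k+1) = -(P (k+1) * P j))) := by
      ext j; simp [Finset.mem_filter, Finset.mem_range]
    have hoddc : Odd (((Finset.range (k+1)).filter
        (fun j => P j * P (k+1) = -(P (k+1) * P j))).card) := by
      have := hodd (k+1) (Nat.succ_le_succ (Nat.zero_le k)) le_rfl
      rwa [hset, Set.ncard_coe_finset] at this
    have hanti : prodDesc P k * P (k+1) = -(P (k+1) * prodDesc P k) := by
      have := prodDesc_mul_sign P hcomm (k+1) k
      rwa [hoddc.neg_one_pow, neg_one_smul] at this
    show P (k+1) * nestedComm P k - nestedComm P k * P (k+1) = _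
    rw [ihk, Matrix.mul_smul, Matrix.smul_mul, hanti, prodDesc]
    rw [smul_neg, sub_neg_eq_add, ← two_smul ℂ, smul_smul, pow_succ, mul_comm]
end

section
/- Let P₀, P₁, …, P_p be operators such that any two either commute or anticommute. If there exists some i ∈ {1, …, p} such that Pᵢ anticommutes with an even number of the operators Pⱼ with j < i, then the nested commutator [P_p, [P_{p-1}, …, [P₁, P₀]…]] = 0. -/
lemma nestedComm_sign {N : ℕ} (P : ℕ → Matrix (Fin N) (Fin N) ℂ)
    (A : Matrix (Fin N) (Fin N) ℂ) (ε : ℕ → ℂ)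
    (h : ∀ j, A * P j = ε j • (P j * A)) :
    ∀ k, A * nestedComm P k = (∏ j ∈ Finset.range (k+1), ε j) • (nestedComm P k * A) := by
  intro k
  induction k with
  | zero => simpa [nestedComm] using h 0
  | succ k ih =>
    have h1 : A * (P (k+1) * nestedComm P k)
        = (∏ j ∈ Finset.range (k+2), ε j) • (P (k+1) * nestedComm P k * A) := by
      calc A * (P (k+1) * nestedComm P k) = (A * P (k+1)) * nestedComm P k := by
              rw [mul_assoc]
        _ = (ε (k+1) • (P (k+1) * A)) * nestedComm P k := by rw [h (k+1)]
        _ = ε (k+1) • (P (k+1) * (A * nestedComm P k)) := by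
              rw [smul_mul_assoc, mul_assoc]
        _ = ε (k+1) • (P (k+1) * ((∏ j ∈ Finset.range (k+1), ε j) • (nestedComm P k * A))) := by
              rw [ih]
        _ = (ε (k+1) * ∏ j ∈ Finset.range (k+1), ε j) • (P (k+1) * nestedComm P k * A) := by
              rw [mul_smul_comm, smul_smul, mul_assoc]
        _ = (∏ j ∈ Finset.range (k+2), ε j) • (P (k+1) * nestedComm P k * A) := by
              congr 1
              simp [Finset.prod_range_succ]
              try ring
    have h2 : A * (nestedComm P k * P (k+1))
        = (∏ j ∈ Finset.range (k+2), ε j) • (nestedComm P k * P (k+1) * A) := by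
      calc A * (nestedComm P k * P (k+1)) = (A * nestedComm P k) * P (k+1) := by
              rw [mul_assoc]
        _ = ((∏ j ∈ Finset.range (k+1), ε j) • (nestedComm P k * A)) * P (k+1) := by rw [ih]
        _ = (∏ j ∈ Finset.range (k+1), ε j) • (nestedComm P k * (A * P (k+1))) := by
              rw [smul_mul_assoc, mul_assoc]
        _ = (∏ j ∈ Finset.range (k+1), ε j) • (nestedComm P k * (ε (k+1) • (P (k+1) * A))) := by
              rw [h (k+1)]
        _ = ((∏ j ∈ Finset.range (k+1), ε j) * ε (k+1)) • (nestedComm P k * P (k+1) * A) := by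
              rw [mul_smul_comm, smul_smul, mul_assoc]
        _ = (∏ j ∈ Finset.range (k+2), ε j) • (nestedComm P k * P (k+1) * A) := by
              congr 1
              simp [Finset.prod_range_succ]
              try ring
    show A * (P (k+1) * nestedComm P k - nestedComm P k * P (k+1)) = _
    rw [mul_sub, h1, h2, ← smul_sub]
    congr 1
    show _ = (P (k+1) * nestedComm P k - nestedComm P k * P (k+1)) * A
    rw [sub_mul]

lemma nestedComm_zero_of_zero {M : Type*} [Ring M] (P : ℕ → M) {i : ℕ}
    (h : nestedComm P i = 0) : ∀ k, i ≤ k → nestedComm P k = 0 := by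
  intro k hk
  induction k with
  | zero => simpa [Nat.le_zero.mp hk] using h
  | succ k ih =>
    rcases Nat.lt_or_ge i (k+1) with h1 | h1
    · have := ih (Nat.lt_succ_iff.mp h1)
      show P (k+1) * nestedComm P k - nestedComm P k * P (k+1) = 0
      rw [this, mul_zero, zero_mul, sub_zero]
    · have : i = k + 1 := le_antisymm hk h1
      rw [← this]; exact h

/-- If operators pairwise commute or anticommute, and some `P i`
(`1 ≤ i ≤ p`) anticommutes with an even number of the `P j`, `j < i`, then
`[P p, …, [P 1, P 0]…] = 0`. -/
theorem nestedComm_eq_zero_of_even_anticomm {N : ℕ} (p : ℕ)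
    (P : ℕ → Matrix (Fin N) (Fin N) ℂ)
    (hcomm : ∀ i j, P i * P j = P j * P i ∨ P i * P j = -(P j * P i))
    (heven : ∃ i, 1 ≤ i ∧ i ≤ p ∧
      Even ({j | j < i ∧ P j * P i = -(P i * P j)}.ncard)) :
    nestedComm P p = 0 := by
  classical
  obtain ⟨i, hi1, hip, hev⟩ := heven
  set ε : ℕ → ℂ := fun j => if P j * P i = -(P i * P j) then -1 else 1 with hε
  have hsign : ∀ j, P i * P j = ε j • (P j * P i) := by
    intro j
    show P i * P j = (if P j * P i = -(P i * P j) then (-1:ℂ) else 1) • (P j * P i)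
    by_cases hj : P j * P i = -(P i * P j)
    · rw [if_pos hj, hj]; simp
    · rcases hcomm i j with hc | hc
      · rw [if_neg hj, one_smul, hc]
      · exact absurd (by rw [hc, neg_neg] : P j * P i = -(P i * P j)) hj
  obtain ⟨i', rfl⟩ : ∃ i', i = i' + 1 := ⟨i - 1, (Nat.succ_pred_eq_of_pos hi1).symm⟩
  have key := nestedComm_sign P (P (i'+1)) ε hsign i'
  have hset : {j | j < i' + 1 ∧ P j * P (i'+1) = -(P (i'+1) * P j)}
      = ↑((Finset.range (i'+1)).filter (fun j => P j * P (i'+1) = -(P (i'+1) * P j))) := by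
    ext j; simp [Finset.mem_filter, Finset.mem_range, and_comm]
  rw [hset, Set.ncard_coe_finset] at hev
  have hprod : (∏ j ∈ Finset.range (i'+1), ε j) = 1 := by
    rw [hε]
    rw [Finset.prod_ite, Finset.prod_const, Finset.prod_const, one_pow, mul_one]
    exact hev.neg_one_pow
  rw [hprod, one_smul] at key
  have hz : nestedComm P (i'+1) = 0 := by
    show P (i'+1) * nestedComm P i' - nestedComm P i' * P (i'+1) = 0
    rw [key, sub_self]
  exact nestedComm_zero_of_zero P hz p hip
end

section
/- Let P₀, …, P_p be weighted Pauli strings with nonzero weights (i.e., each Pᵢ = cᵢ Qᵢ where cᵢ ≠ 0 is a scalar and Qᵢ is a tensor product of single-qubit Pauli matrices I, X, Y, Z on n qubits). Then [P_p, …, [P₁, P₀]…] = 0 if and only if there exists some i ∈ {1, …, p} such that Pᵢ anticommutes with an even number of the operators Pⱼ with j < i. -/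
/-- The single-qubit Pauli matrices `I, X, Y, Z`. -/
def pauliBase : Fin 4 → Matrix (Fin 2) (Fin 2) ℂ
  | 0 => 1
  | 1 => !![0, 1; 1, 0]
  | 2 => !![0, -Complex.I; Complex.I, 0]
  | 3 => !![1, 0; 0, -1]

/-- The `n`-qubit Pauli string given by the tensor product `⨂ i, pauliBase (σ i)`. -/
def pauliString {n : ℕ} (σ : Fin n → Fin 4) :
    Matrix (Fin n → Fin 2) (Fin n → Fin 2) ℂ :=
  fun x y => ∏ i, pauliBase (σ i) (x i) (y i)

namespace NC

def mul4 : Fin 4 → Fin 4 → Fin 4 :=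
  fun a b => ![![0,1,2,3],![1,0,3,2],![2,3,0,1],![3,2,1,0]] a b

def ph : Fin 4 → Fin 4 → ℂ :=
  fun a b => ![![1,1,1,1],![1,1,Complex.I,-Complex.I],![1,-Complex.I,1,Complex.I],![1,Complex.I,-Complex.I,1]] a b

def ee : Fin 4 → Fin 4 → ZMod 2 :=
  fun a b => if a = 0 ∨ b = 0 ∨ a = b then 0 else 1

def χ : ZMod 2 → ℂ := fun t => if t = 0 then 1 else -1

lemma base_mul (a b : Fin 4) : pauliBase a * pauliBase b = ph a b • pauliBase (mul4 a b) := by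
  fin_cases a <;> fin_cases b <;>
    · ext i j
      fin_cases i <;> fin_cases j <;>
        simp [pauliBase, ph, mul4, Matrix.mul_apply, Fin.sum_univ_two, Matrix.one_apply, Matrix.vecHead, Matrix.vecTail,
          Complex.ext_iff] <;> ring_nf <;> simp [Complex.I_sq, Complex.ext_iff] <;> ring

lemma ph_ne_zero (a b : Fin 4) : ph a b ≠ 0 := by
  fin_cases a <;> fin_cases b <;> simp [ph, Matrix.vecHead, Matrix.vecTail, Complex.I_ne_zero]

lemma ph_self (a : Fin 4) : ph a a = 1 := by
  fin_cases a <;> simp [ph, Matrix.vecHead, Matrix.vecTail]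

lemma mul4_self : ∀ a : Fin 4, mul4 a a = 0 := by decide

lemma mul4_comm : ∀ a b : Fin 4, mul4 a b = mul4 b a := by decide

lemma ee_symm : ∀ a b : Fin 4, ee a b = ee b a := by decide

lemma ee_mul4 : ∀ a b c : Fin 4, ee (mul4 a b) c = ee a c + ee b c := by decide

lemma ph_symm (a b : Fin 4) : ph b a = χ (ee a b) * ph a b := by
  fin_cases a <;> fin_cases b <;> simp [ph, ee, χ, Matrix.vecHead, Matrix.vecTail] <;> norm_num

lemma χ_add (s t : ZMod 2) : χ (s + t) = χ s * χ t := by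
  rcases (show ∀ t : ZMod 2, t = 0 ∨ t = 1 by decide) s with rfl | rfl <;>
    rcases (show ∀ t : ZMod 2, t = 0 ∨ t = 1 by decide) t with rfl | rfl <;>
    simp (config := {decide := true}) [χ]

lemma χ_sum {α : Type*} (s : Finset α) (f : α → ZMod 2) :
    χ (∑ i ∈ s, f i) = ∏ i ∈ s, χ (f i) := by
  induction s using Finset.cons_induction with
  | empty => simp [χ]
  | cons a s ha ih => rw [Finset.sum_cons, Finset.prod_cons, χ_add, ih]

end NC

namespace NC

lemma string_mul {n : ℕ} (σ τ : Fin n → Fin 4) :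
    pauliString σ * pauliString τ =
      (∏ i, ph (σ i) (τ i)) • pauliString (fun i => mul4 (σ i) (τ i)) := by
  ext x y
  simp only [Matrix.mul_apply, pauliString, Matrix.smul_apply, smul_eq_mul]
  have h1 : ∀ z : Fin n → Fin 2,
      (∏ i, pauliBase (σ i) (x i) (z i)) * ∏ i, pauliBase (τ i) (z i) (y i)
        = ∏ i, (pauliBase (σ i) (x i) (z i) * pauliBase (τ i) (z i) (y i)) := fun z =>
    (Finset.prod_mul_distrib).symm
  have key := Finset.prod_univ_sum (κ := fun _ : Fin n => Fin 2) (fun _ => Finset.univ)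
      (fun i t => pauliBase (σ i) (x i) t * pauliBase (τ i) t (y i))
  rw [Finset.sum_congr rfl (fun z _ => h1 z), ← Fintype.piFinset_univ, ← key]
  have h2 : ∀ i, (∑ t : Fin 2, pauliBase (σ i) (x i) t * pauliBase (τ i) t (y i))
      = ph (σ i) (τ i) * pauliBase (mul4 (σ i) (τ i)) (x i) (y i) := by
    intro i
    have := congrFun (congrFun (base_mul (σ i) (τ i)) (x i)) (y i)
    simpa [Matrix.mul_apply, Matrix.smul_apply, smul_eq_mul] using this
  rw [Finset.prod_congr rfl (fun i _ => h2 i), Finset.prod_mul_distrib]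

lemma pauliString_zero {n : ℕ} : pauliString (fun _ : Fin n => (0 : Fin 4)) = 1 := by
  ext x y
  show (∏ i, pauliBase 0 (x i) (y i)) = _
  by_cases h : x = y
  · subst h; simp [pauliBase, Matrix.one_apply]
  · rw [Matrix.one_apply_ne h]
    obtain ⟨i, hi⟩ := Function.ne_iff.mp h
    exact Finset.prod_eq_zero (Finset.mem_univ i)
      (by simp [pauliBase, Matrix.one_apply_ne hi])

lemma string_mul_self {n : ℕ} (σ : Fin n → Fin 4) : pauliString σ * pauliString σ = 1 := by
  rw [string_mul]
  simp [mul4_self, ph_self, pauliString_zero]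

lemma string_ne_zero {n : ℕ} (σ : Fin n → Fin 4) : pauliString σ ≠ 0 := by
  intro h
  have h2 := string_mul_self σ
  rw [h, zero_mul] at h2
  have h3 := congrFun (congrFun h2 (fun _ => 0)) (fun _ => 0)
  simp [Matrix.one_apply] at h3

lemma string_mul_ne_zero {n : ℕ} (σ τ : Fin n → Fin 4) :
    pauliString σ * pauliString τ ≠ 0 := by
  rw [string_mul]
  exact smul_ne_zero (Finset.prod_ne_zero_iff.mpr fun i _ => ph_ne_zero _ _) (string_ne_zero _)

def EE {n : ℕ} (σ τ : Fin n → Fin 4) : ZMod 2 := ∑ i, ee (σ i) (τ i)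

lemma EE_symm {n : ℕ} (σ τ : Fin n → Fin 4) : EE σ τ = EE τ σ :=
  Finset.sum_congr rfl fun i _ => ee_symm _ _

lemma string_comm {n : ℕ} (σ τ : Fin n → Fin 4) :
    pauliString τ * pauliString σ = χ (EE σ τ) • (pauliString σ * pauliString τ) := by
  rw [string_mul, string_mul, smul_smul]
  have h1 : (fun i => mul4 (τ i) (σ i)) = fun i => mul4 (σ i) (τ i) := by
    funext i; exact mul4_comm _ _
  rw [h1]
  congr 1
  rw [EE, χ_sum, ← Finset.prod_mul_distrib]
  exact Finset.prod_congr rfl fun i _ => ph_symm (σ i) (τ i)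

lemma χ_zero : χ 0 = 1 := by simp [χ]

lemma χ_one : χ 1 = -1 := by simp [χ]

lemma z2cases : ∀ t : ZMod 2, t = 0 ∨ t = 1 := by decide

lemma anti_iff {n : ℕ} (σ τ : Fin n → Fin 4) :
    pauliString τ * pauliString σ = -(pauliString σ * pauliString τ) ↔ EE σ τ = 1 := by
  rcases z2cases (EE σ τ) with h | h
  · rw [h]
    constructor
    · intro hM
      rw [string_comm σ τ, h] at hM
      rw [χ_zero, one_smul] at hM
      have h2 : pauliString σ * pauliString τ + pauliString σ * pauliString τ = 0 := by
        nth_rewrite 1 [hM]; exact neg_add_cancel _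
      rw [← two_smul ℂ] at h2
      rcases smul_eq_zero.mp h2 with h3 | h3
      · norm_num at h3
      · exact absurd h3 (string_mul_ne_zero σ τ)
    · intro h1; exact absurd h1.symm (by decide)
  · rw [h, string_comm σ τ, h, χ_one, neg_smul, one_smul]
    simp

end NC

namespace NC

variable {n : ℕ} (σ : ℕ → Fin n → Fin 4)

/-- iterated product string -/
def ρa : ℕ → (Fin n → Fin 4)
  | 0 => σ 0
  | k+1 => fun q => mul4 (σ (k+1) q) (ρa k q)

/-- parity of the number of previous strings anticommuting with string `i` -/
def g (i : ℕ) : ZMod 2 := ∑ j ∈ Finset.range i, EE (σ j) (σ i)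

lemma EE_rho (k : ℕ) (τ : Fin n → Fin 4) :
    EE (ρa σ k) τ = ∑ j ∈ Finset.range (k+1), EE (σ j) τ := by
  induction k with
  | zero => simp [ρa]
  | succ k ih =>
    have h : EE (ρa σ (k+1)) τ = EE (σ (k+1)) τ + EE (ρa σ k) τ := by
      show (∑ i, ee (mul4 (σ (k+1) i) (ρa σ k i)) (τ i)) = _
      rw [EE, EE, ← Finset.sum_add_distrib]
      exact Finset.sum_congr rfl fun i _ => ee_mul4 _ _ _
    rw [h, ih, Finset.sum_range_succ _ (k+1)]
    exact add_comm _ _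

variable (c : ℕ → ℂ) (P : ℕ → Matrix (Fin n → Fin 2) (Fin n → Fin 2) ℂ)

lemma struct (hc : ∀ i, c i ≠ 0) (hP : ∀ i, P i = c i • pauliString (σ i)) (k : ℕ)
    (h : ∀ i, 1 ≤ i → i ≤ k → g σ i = 1) :
    ∃ d : ℂ, d ≠ 0 ∧ nestedComm P k = d • pauliString (ρa σ k) := by
  induction k with
  | zero => exact ⟨c 0, hc 0, by rw [nestedComm, hP 0]; rfl⟩
  | succ k ih =>
    obtain ⟨d, hd, hC⟩ := ih (fun i h1 h2 => h i h1 (h2.trans (Nat.le_succ k)))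
    have hE : EE (σ (k+1)) (ρa σ k) = 1 := by
      rw [EE_symm, EE_rho]
      exact h (k+1) (Nat.le_add_left 1 k) le_rfl
    set w : ℂ := ∏ q, ph (σ (k+1) q) (ρa σ k q) with hw
    have hwne : w ≠ 0 := Finset.prod_ne_zero_iff.mpr fun q _ => ph_ne_zero _ _
    have hQR : pauliString (σ (k+1)) * pauliString (ρa σ k) = w • pauliString (ρa σ (k+1)) := by
      rw [string_mul]; rfl
    have hRQ : pauliString (ρa σ k) * pauliString (σ (k+1)) =
        -(pauliString (σ (k+1)) * pauliString (ρa σ k)) := by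
      rw [string_comm (σ (k+1)) (ρa σ k), hE, χ_one, neg_smul, one_smul]
    refine ⟨c (k+1) * d * 2 * w, by simp [hc (k+1), hd, hwne], ?_⟩
    show P (k+1) * nestedComm P k - nestedComm P k * P (k+1) = _
    rw [hC, hP (k+1), smul_mul_assoc, smul_mul_assoc, mul_smul_comm, mul_smul_comm,
      hRQ, hQR]
    simp only [smul_neg, smul_smul, sub_neg_eq_add, ← add_smul]
    congr 1
    ring

lemma kill (hc : ∀ i, c i ≠ 0) (hP : ∀ i, P i = c i • pauliString (σ i)) (k : ℕ)
    (hg : g σ (k+1) = 0) (d : ℂ)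
    (hC : nestedComm P k = d • pauliString (ρa σ k)) : nestedComm P (k+1) = 0 := by
  have hE : EE (σ (k+1)) (ρa σ k) = 0 := by
    rw [EE_symm, EE_rho]
    exact hg
  have hRQ : pauliString (ρa σ k) * pauliString (σ (k+1)) =
      pauliString (σ (k+1)) * pauliString (ρa σ k) := by
    rw [string_comm (σ (k+1)) (ρa σ k), hE, χ_zero, one_smul]
  show P (k+1) * nestedComm P k - nestedComm P k * P (k+1) = 0
  rw [hC, hP (k+1), smul_mul_assoc, smul_mul_assoc, mul_smul_comm, mul_smul_comm,
    hRQ, smul_smul, smul_smul, mul_comm (c (k+1)) d, sub_self]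

lemma persist (i k : ℕ) (h : nestedComm P i = 0) (hik : i ≤ k) : nestedComm P k = 0 := by
  induction k, hik using Nat.le_induction with
  | base => exact h
  | succ k hk ih =>
    show P (k+1) * nestedComm P k - nestedComm P k * P (k+1) = 0
    rw [ih]
    simp

lemma antiP_iff (hc : ∀ i, c i ≠ 0) (hP : ∀ i, P i = c i • pauliString (σ i)) (i j : ℕ) :
    P j * P i = -(P i * P j) ↔ EE (σ i) (σ j) = 1 := by
  rw [← anti_iff (σ i) (σ j)]
  rw [hP i, hP j, smul_mul_assoc, smul_mul_assoc, mul_smul_comm, mul_smul_comm,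
    smul_smul, smul_smul, ← smul_neg, mul_comm (c i) (c j)]
  constructor
  · intro h
    exact smul_right_injective _ (mul_ne_zero (hc j) (hc i)) h
  · intro h
    rw [h]

lemma count_iff (hc : ∀ i, c i ≠ 0) (hP : ∀ i, P i = c i • pauliString (σ i)) (i : ℕ) :
    Even ({j | j < i ∧ P j * P i = -(P i * P j)}.ncard) ↔ g σ i = 0 := by
  have hset : {j | j < i ∧ P j * P i = -(P i * P j)} =
      ↑((Finset.range i).filter (fun j => EE (σ j) (σ i) = 1)) := by
    ext j
    simp only [Set.mem_setOf_eq, Finset.coe_filter, Finset.mem_range,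
      antiP_iff σ c P hc hP i j, EE_symm (σ i) (σ j)]
  rw [hset, Set.ncard_coe_finset]
  have hg : g σ i = (((Finset.range i).filter (fun j => EE (σ j) (σ i) = 1)).card : ZMod 2) := by
    rw [← Finset.sum_boole]
    exact Finset.sum_congr rfl fun j _ => by
      rcases z2cases (EE (σ j) (σ i)) with h | h <;> simp [h]
  rw [hg, ZMod.natCast_eq_zero_iff, even_iff_two_dvd]

end NC

/-- For weighted Pauli strings `P i = c i • Q i` with nonzero weights,
the nested commutator `[P p, …, [P 1, P 0]…]` vanishes iff some `P i` (`1 ≤ i ≤ p`)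
anticommutes with an even number of the `P j`, `j < i`. -/
theorem nestedComm_eq_zero_iff {n : ℕ} (p : ℕ) (c : ℕ → ℂ) (σ : ℕ → Fin n → Fin 4)
    (hc : ∀ i, c i ≠ 0)
    (P : ℕ → Matrix (Fin n → Fin 2) (Fin n → Fin 2) ℂ)
    (hP : ∀ i, P i = c i • pauliString (σ i)) :
    nestedComm P p = 0 ↔
      ∃ i, 1 ≤ i ∧ i ≤ p ∧
        Even ({j | j < i ∧ P j * P i = -(P i * P j)}.ncard) := by
  have hcount := NC.count_iff σ c P hc hP
  constructor
  · intro h0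
    by_contra hno
    push_neg at hno
    have hall : ∀ i, 1 ≤ i → i ≤ p → NC.g σ i = 1 := by
      intro i h1 h2
      rcases NC.z2cases (NC.g σ i) with h | h
      · exact absurd ((hcount i).mpr h) (hno i h1 h2)
      · exact h
    obtain ⟨d, hd, hC⟩ := NC.struct σ c P hc hP p hall
    rw [h0] at hC
    exact NC.string_ne_zero _ (by
      rcases smul_eq_zero.mp hC.symm with h | h
      · exact absurd h hd
      · exact h)
  · intro ⟨i, h1, h2, heven⟩
    have hQ : ∃ m, 1 ≤ m ∧ m ≤ p ∧ NC.g σ m = 0 := ⟨i, h1, h2, (hcount i).mp heven⟩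
    classical
    let m := Nat.find hQ
    obtain ⟨hm1, hmp, hmg⟩ := Nat.find_spec hQ
    have hmin : ∀ i', i' < m → ¬(1 ≤ i' ∧ i' ≤ p ∧ NC.g σ i' = 0) := fun i' h =>
      Nat.find_min hQ h
    obtain ⟨k, hk⟩ : ∃ k, m = k + 1 := ⟨m - 1, (Nat.succ_pred_eq_of_pos hm1).symm⟩
    have hall : ∀ i', 1 ≤ i' → i' ≤ k → NC.g σ i' = 1 := by
      intro i' ha hb
      rcases NC.z2cases (NC.g σ i') with h | h
      · exact absurd ⟨ha, by omega, h⟩ (hmin i' (by omega))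
      · exact h
    obtain ⟨d, hd, hC⟩ := NC.struct σ c P hc hP k hall
    have hz : nestedComm P (k+1) = 0 := NC.kill σ c P hc hP k (hk ▸ hmg) d hC
    exact NC.persist P (k+1) p hz (by omega)
end
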